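/- Lower bound of the betting supremum by the binary relative entropy. For every integer T ≥ 1, every z ∈ [0,1]^T and every μ ∈ [0,1], one has T·Ψ(z,μ) ≥ T·kl(μ_z, μ); moreover, if z_t ∈ {0,1} for all t ∈ [1:T], then T·Ψ(z,μ) = T·kl(μ_z, μ). -/

import Mathlib

open MeasureTheory Set

/-- Extended-real logarithm: `log ⊤ = ⊤`, `log x = -∞` for `x ≤ 0` (in particular `log 0 = -∞`). -/
noncomputable def elog (x : EReal) : EReal :=
  if x = ⊤ then ⊤ else if x ≤ 0 then ⊥ else ((Real.log x.toReal : ℝ) : EReal)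

/-- Lower endpoint `-1/(1-μ)` of the betting interval, with the convention `1/0 = +∞`. -/
noncomputable def betLower (μ : ℝ) : EReal := if μ = 1 then ⊥ else ((-(1 - μ)⁻¹ : ℝ) : EReal)

/-- Upper endpoint `1/μ` of the betting interval, with the convention `1/0 = +∞`. -/
noncomputable def betUpper (μ : ℝ) : EReal := if μ = 0 then ⊤ else ((μ⁻¹ : ℝ) : EReal)

/-- The betting interval `A_μ = [-1/(1-μ), 1/μ]` (as a set of extended reals). -/
noncomputable def betSet (μ : ℝ) : Set EReal := Set.Icc (betLower μ) (betUpper μ)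

/-- `(1/T) ∑_t log(1 + α (z_t - μ))`, with EReal conventions (`0 * ±∞ = 0`, `log 0 = -∞`). -/
noncomputable def betTerm {T : ℕ} (z : Fin T → ℝ) (μ : ℝ) (α : EReal) : EReal :=
  (((T : ℝ)⁻¹ : ℝ) : EReal) * ∑ t : Fin T, elog (1 + α * ((z t - μ : ℝ) : EReal))

/-- `Ψ(z, μ) = sup_{α ∈ A_μ} (1/T) ∑_t log(1 + α (z_t - μ))`. -/
noncomputable def Psi {T : ℕ} (z : Fin T → ℝ) (μ : ℝ) : EReal :=
  ⨆ α ∈ betSet μ, betTerm z μ α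

/-- `μ_z = (1/T) ∑_t z_t`. -/
noncomputable def muz {T : ℕ} (z : Fin T → ℝ) : ℝ := (T : ℝ)⁻¹ * ∑ t, z t

/-- The binary relative entropy `kl(p, q)`, valued in the extended reals, with
`kl(0,q) = log(1/(1-q))`, `kl(1,q) = log(1/q)`, `kl(p,0) = +∞` for `p > 0` and
`kl(p,1) = +∞` for `p < 1`. -/
noncomputable def bkl (p q : ℝ) : EReal :=
  if p = 0 then (if q = 1 then ⊤ else ((Real.log (1 / (1 - q)) : ℝ) : EReal))
  else if p = 1 then (if q = 0 then ⊤ else ((Real.log (1 / q) : ℝ) : EReal))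
  else if q = 0 ∨ q = 1 then ⊤
  else ((p * Real.log (p / q) + (1 - p) * Real.log ((1 - p) / (1 - q)) : ℝ) : EReal)

/-- The upper inverse `kl_+^{-1}(p, C) = sup {q ∈ [0,1] : kl(p,q) ≤ C}`. -/
noncomputable def klInvPlus (p : ℝ) (C : EReal) : ℝ :=
  sSup {q : ℝ | q ∈ Set.Icc (0 : ℝ) 1 ∧ bkl p q ≤ C}

/-- The lower inverse `kl_-^{-1}(p, C) = inf {q ∈ [0,1] : kl(p,q) ≤ C}`. -/
noncomputable def klInvMinus (p : ℝ) (C : EReal) : ℝ :=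
  sInf {q : ℝ | q ∈ Set.Icc (0 : ℝ) 1 ∧ bkl p q ≤ C}

/-! ### Auxiliary lemmas -/

section Aux

lemma elog_coe_of_pos {x : ℝ} (hx : 0 < x) : elog (x : EReal) = ((Real.log x : ℝ) : EReal) := by
  rw [elog, if_neg (EReal.coe_ne_top x), if_neg (by exact_mod_cast hx.not_ge), EReal.toReal_coe]

lemma elog_nonpos {x : ℝ} (hx : x ≤ 0) : elog (x : EReal) = ⊥ := by
  rw [elog, if_neg (EReal.coe_ne_top x), if_pos (by exact_mod_cast hx)]

lemma elog_one : elog (1 : EReal) = 0 := by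
  have h := elog_coe_of_pos one_pos
  rw [Real.log_one] at h
  simpa using h

lemma elog_top : elog (⊤ : EReal) = ⊤ := if_pos rfl

lemma one_add_top : (1 : EReal) + ⊤ = ⊤ :=
  EReal.add_top_of_ne_bot (EReal.coe_ne_bot 1)

lemma sum_eq_bot' {ι : Type*} {s : Finset ι} {f : ι → EReal} {i : ι} (hi : i ∈ s) (h : f i = ⊥) :
    ∑ j ∈ s, f j = ⊥ := by
  classical
  rw [← Finset.add_sum_erase s f hi, h, EReal.bot_add]

lemma ereal_coe_sum {ι : Type*} (s : Finset ι) (f : ι → ℝ) :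
    ((∑ i ∈ s, f i : ℝ) : EReal) = ∑ i ∈ s, (f i : EReal) := by
  classical
  induction s using Finset.induction_on with
  | empty => simp
  | insert a s h ih => rw [Finset.sum_insert h, Finset.sum_insert h, EReal.coe_add, ih]

lemma betTerm_coe {T : ℕ} (z : Fin T → ℝ) (μ r : ℝ) (h : ∀ t, 0 < 1 + r * (z t - μ)) :
    betTerm z μ (r : EReal) = (((T : ℝ)⁻¹ * ∑ t, Real.log (1 + r * (z t - μ)) : ℝ) : EReal) := by
  rw [betTerm]
  have hterm : ∀ t : Fin T, elog (1 + (r : EReal) * ((z t - μ : ℝ) : EReal))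
      = ((Real.log (1 + r * (z t - μ)) : ℝ) : EReal) := by
    intro t
    rw [← EReal.coe_mul, show (1 : EReal) = ((1:ℝ) : EReal) from rfl, ← EReal.coe_add,
      elog_coe_of_pos (h t)]
  rw [Finset.sum_congr rfl (fun t _ => hterm t), ← ereal_coe_sum, ← EReal.coe_mul]

lemma betTerm_bot {T : ℕ} (hT : 0 < T) (z : Fin T → ℝ) (μ r : ℝ) (t0 : Fin T)
    (h : 1 + r * (z t0 - μ) ≤ 0) : betTerm z μ (r : EReal) = ⊥ := by
  have hb : elog (1 + (r : EReal) * ((z t0 - μ : ℝ) : EReal)) = ⊥ := by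
    rw [← EReal.coe_mul, show (1 : EReal) = ((1:ℝ) : EReal) from rfl, ← EReal.coe_add,
      elog_nonpos h]
  rw [betTerm, sum_eq_bot' (Finset.mem_univ t0) hb,
    EReal.coe_mul_bot_of_pos (by positivity)]

/-- Real-valued binary KL divergence. -/
noncomputable def klReal (p q : ℝ) : ℝ :=
  p * Real.log (p / q) + (1 - p) * Real.log ((1 - p) / (1 - q))

lemma bkl_coe {p μ : ℝ} (hμ0 : 0 < μ) (hμ1 : μ < 1) :
    bkl p μ = ((klReal p μ : ℝ) : EReal) := by
  rw [bkl, klReal]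
  by_cases h0 : p = 0
  · rw [if_pos h0, if_neg hμ1.ne, h0]
    norm_num
  by_cases h1 : p = 1
  · rw [if_neg h0, if_pos h1, if_neg hμ0.ne', h1]
    norm_num
  · rw [if_neg h0, if_neg h1, if_neg (by push_neg; exact ⟨hμ0.ne', hμ1.ne⟩)]

lemma log_aux {w x y : ℝ} (hw : 0 < w) (hx : 0 < x) (hy : 0 < y) :
    w * Real.log x ≤ w * Real.log y + (x / y) * w - w := by
  have h : Real.log (x / y) ≤ x / y - 1 := Real.log_le_sub_one_of_pos (div_pos hx hy)
  rw [Real.log_div hx.ne' hy.ne'] at h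
  nlinarith

lemma real_upper {p μ x1 x0 : ℝ} (hp0 : 0 ≤ p) (hp1 : p ≤ 1) (hμ0 : 0 < μ) (hμ1 : μ < 1)
    (hsum : μ * x1 + (1 - μ) * x0 = 1)
    (hx1 : 0 ≤ x1) (hx0 : 0 ≤ x0)
    (h1 : 0 < p → 0 < x1) (h0 : p < 1 → 0 < x0) :
    p * Real.log x1 + (1 - p) * Real.log x0 ≤ klReal p μ := by
  rcases eq_or_lt_of_le hp0 with h | hp
  · have hx0' := h0 (by linarith)
    have hle : x0 ≤ 1 / (1 - μ) := by
      rw [le_div_iff₀ (by linarith)]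
      nlinarith [mul_nonneg hμ0.le hx1]
    have := Real.log_le_log hx0' hle
    rw [← h, klReal]
    simp only [zero_mul, sub_zero, one_mul, zero_add]
    linarith
  rcases eq_or_lt_of_le hp1 with h | hp'
  · have hx1' := h1 hp
    have hle : x1 ≤ 1 / μ := by
      rw [le_div_iff₀ hμ0]
      nlinarith [mul_nonneg (by linarith : (0:ℝ) ≤ 1 - μ) hx0]
    have := Real.log_le_log hx1' hle
    rw [h, klReal]
    simp only [sub_self, zero_mul, one_mul, add_zero]
    linarith
  · have hx1' := h1 hp
    have hx0' := h0 hp'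
    have ha : (0:ℝ) < p / μ := div_pos hp hμ0
    have hb : (0:ℝ) < (1 - p) / (1 - μ) := div_pos (by linarith) (by linarith)
    have k1 := log_aux hp hx1' ha
    have k2 := log_aux (show (0:ℝ) < 1 - p by linarith) hx0' hb
    have e1 : (x1 / (p / μ)) * p = μ * x1 := by field_simp
    have e2 : (x0 / ((1 - p) / (1 - μ))) * (1 - p) = (1 - μ) * x0 := by
      rw [div_div_eq_mul_div, div_mul_eq_mul_div, mul_div_assoc,
        div_self (by linarith : (1:ℝ)-p ≠ 0), mul_one, mul_comm]
    rw [e1] at k1; rw [e2] at k2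
    rw [klReal]
    linarith

lemma key_id {p μ z : ℝ} (hμ0 : μ ≠ 0) (hμ1 : μ ≠ 1) :
    1 + (p - μ) / (μ * (1 - μ)) * (z - μ) = z * (p / μ) + (1 - z) * ((1 - p) / (1 - μ)) := by
  have h1 : (1:ℝ) - μ ≠ 0 := sub_ne_zero.2 (Ne.symm hμ1)
  field_simp
  ring

lemma real_lower_pt {a b t : ℝ} (ha : 0 < a) (hb : 0 < b) (ht0 : 0 ≤ t) (ht1 : t ≤ 1) :
    t * Real.log a + (1 - t) * Real.log b ≤ Real.log (t * a + (1 - t) * b) := by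
  have h := strictConcaveOn_log_Ioi.concaveOn.2 (Set.mem_Ioi.2 ha) (Set.mem_Ioi.2 hb)
    ht0 (sub_nonneg.2 ht1) (by ring : t + (1 - t) = 1)
  simpa [smul_eq_mul] using h

lemma muz_mem {T : ℕ} (hT : 1 ≤ T) (z : Fin T → ℝ) (hz : ∀ t, z t ∈ Set.Icc (0:ℝ) 1) :
    0 ≤ muz z ∧ muz z ≤ 1 ∧ ∑ t, z t = T * muz z := by
  have hT0 : (0:ℝ) < T := by exact_mod_cast hT
  have h1 : 0 ≤ ∑ t, z t := Finset.sum_nonneg fun t _ => (hz t).1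
  have h2 : ∑ t, z t ≤ T := by
    calc ∑ t, z t ≤ ∑ _t : Fin T, (1:ℝ) := Finset.sum_le_sum fun t _ => (hz t).2
    _ = T := by simp
  have h3 : ∑ t, z t = T * muz z := by rw [muz]; field_simp
  refine ⟨?_, ?_, h3⟩
  · rw [muz]; positivity
  · nlinarith

end Aux

section Mid

lemma lower_mid {T : ℕ} (hT : 1 ≤ T) (z : Fin T → ℝ) (hz : ∀ t, z t ∈ Set.Icc (0:ℝ) 1)
    {μ : ℝ} (hμ0 : 0 < μ) (hμ1 : μ < 1) : bkl (muz z) μ ≤ Psi z μ := by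
  obtain ⟨hp0, hp1, hps⟩ := muz_mem hT z hz
  set p := muz z with hpdef
  have hT0 : (0:ℝ) < T := by exact_mod_cast hT
  have h1μ : (0:ℝ) < 1 - μ := by linarith
  set α : ℝ := (p - μ) / (μ * (1 - μ)) with hα
  have hmem : ((α : ℝ) : EReal) ∈ betSet μ := by
    constructor
    · rw [betLower, if_neg hμ1.ne]
      apply EReal.coe_le_coe_iff.2
      rw [hα, le_div_iff₀ (by positivity)]
      have he : -(1-μ)⁻¹ * (μ * (1-μ)) = -μ := by field_simp
      rw [he]; linarith
    · rw [betUpper, if_neg hμ0.ne']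
      apply EReal.coe_le_coe_iff.2
      rw [hα, div_le_iff₀ (by positivity)]
      have he : μ⁻¹ * (μ * (1-μ)) = 1 - μ := by field_simp
      rw [he]; linarith
  have hid : ∀ t : Fin T, 1 + α * (z t - μ) = z t * (p/μ) + (1 - z t) * ((1-p)/(1-μ)) :=
    fun t => key_id hμ0.ne' hμ1.ne
  have main : (∀ t : Fin T, 0 < 1 + α * (z t - μ)) ∧
      klReal p μ ≤ (T:ℝ)⁻¹ * ∑ t, Real.log (1 + α * (z t - μ)) := by
    by_cases hp00 : p = 0
    · have hz0 : ∀ t, z t = 0 := by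
        have hs0 : ∑ t, z t = 0 := by rw [hps, hp00, mul_zero]
        exact fun t =>
          (Finset.sum_eq_zero_iff_of_nonneg fun i _ => (hz i).1).1 hs0 t (Finset.mem_univ t)
      have hval : ∀ t : Fin T, 1 + α * (z t - μ) = 1 / (1 - μ) := by
        intro t; rw [hid t, hz0 t, hp00]; norm_num
      constructor
      · intro t; rw [hval t]; positivity
      · have hsum : ∑ t : Fin T, Real.log (1 + α * (z t - μ))
            = (T:ℝ) * Real.log (1/(1-μ)) := by
          rw [Finset.sum_congr rfl fun t _ => by rw [hval t]]
          simp [Finset.sum_const, Finset.card_univ, nsmul_eq_mul]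
        rw [hsum, inv_mul_cancel_left₀ hT0.ne', klReal, hp00]
        norm_num
    by_cases hp11 : p = 1
    · have hz1 : ∀ t, z t = 1 := by
        have hs : ∑ t : Fin T, (1 - z t) = 0 := by
          rw [Finset.sum_sub_distrib, hps, hp11]; simp
        intro t
        have := (Finset.sum_eq_zero_iff_of_nonneg
          fun i _ => sub_nonneg.2 (hz i).2).1 hs t (Finset.mem_univ t)
        linarith
      have hval : ∀ t : Fin T, 1 + α * (z t - μ) = 1 / μ := by
        intro t; rw [hid t, hz1 t, hp11]; norm_num
      constructor
      · intro t; rw [hval t]; positivity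
      · have hsum : ∑ t : Fin T, Real.log (1 + α * (z t - μ))
            = (T:ℝ) * Real.log (1/μ) := by
          rw [Finset.sum_congr rfl fun t _ => by rw [hval t]]
          simp [Finset.sum_const, Finset.card_univ, nsmul_eq_mul]
        rw [hsum, inv_mul_cancel_left₀ hT0.ne', klReal, hp11]
        norm_num
    · have hpp : 0 < p := hp0.lt_of_ne (Ne.symm hp00)
      have hpp1 : p < 1 := hp1.lt_of_ne hp11
      have ha : (0:ℝ) < p / μ := div_pos hpp hμ0
      have hb : (0:ℝ) < (1-p)/(1-μ) := div_pos (by linarith) h1μ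
      have hpos : ∀ t : Fin T, 0 < 1 + α * (z t - μ) := by
        intro t
        rw [hid t]
        rcases lt_or_ge (z t) 1 with h | h
        · have h1' : 0 < (1 - z t) * ((1-p)/(1-μ)) := mul_pos (by linarith) hb
          have h2' : 0 ≤ z t * (p/μ) := mul_nonneg (hz t).1 ha.le
          linarith
        · have hzt : z t = 1 := le_antisymm (hz t).2 h
          rw [hzt]; simpa using ha
      refine ⟨hpos, ?_⟩
      have hptw : ∀ t ∈ Finset.univ, z t * Real.log (p/μ) + (1 - z t) * Real.log ((1-p)/(1-μ))
          ≤ Real.log (1 + α * (z t - μ)) := fun t _ => by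
        rw [hid t]; exact real_lower_pt ha hb (hz t).1 (hz t).2
      have hsum := Finset.sum_le_sum hptw
      have e : ∑ t : Fin T, (1 - z t) = (T:ℝ) - T * p := by
        rw [Finset.sum_sub_distrib, hps]; simp
      have hL : ∑ t : Fin T, (z t * Real.log (p/μ) + (1 - z t) * Real.log ((1-p)/(1-μ)))
          = (T*p) * Real.log (p/μ) + ((T:ℝ) - T*p) * Real.log ((1-p)/(1-μ)) := by
        rw [Finset.sum_add_distrib, ← Finset.sum_mul, ← Finset.sum_mul, hps, e]
      rw [hL] at hsum
      have hmul := mul_le_mul_of_nonneg_left hsum (inv_nonneg.2 hT0.le)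
      have e2 : (T:ℝ)⁻¹ * ((T*p) * Real.log (p/μ) + ((T:ℝ) - T*p) * Real.log ((1-p)/(1-μ)))
          = p * Real.log (p/μ) + (1-p) * Real.log ((1-p)/(1-μ)) := by
        field_simp
      rw [e2] at hmul
      rw [klReal]
      exact hmul
  obtain ⟨hpos, hineq⟩ := main
  have hble : bkl p μ ≤ betTerm z μ ((α : ℝ) : EReal) := by
    rw [bkl_coe hμ0 hμ1, betTerm_coe z μ α hpos]
    exact EReal.coe_le_coe_iff.2 hineq
  refine hble.trans ?_
  rw [Psi]
  exact le_iSup₂ (f := fun (a : EReal) (_ : a ∈ betSet μ) => betTerm z μ a) ((α : ℝ) : EReal) hmem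

lemma upper_mid {T : ℕ} (hT : 1 ≤ T) (z : Fin T → ℝ) (hz : ∀ t, z t ∈ Set.Icc (0:ℝ) 1)
    (hzb : ∀ t, z t = 0 ∨ z t = 1) {μ : ℝ} (hμ0 : 0 < μ) (hμ1 : μ < 1) :
    Psi z μ ≤ bkl (muz z) μ := by
  obtain ⟨hp0, hp1, hps⟩ := muz_mem hT z hz
  set p := muz z with hpdef
  have hT0 : (0:ℝ) < T := by exact_mod_cast hT
  have h1μ : (0:ℝ) < 1 - μ := by linarith
  rw [Psi]
  refine iSup₂_le fun α hα => ?_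
  obtain ⟨hαl, hαu⟩ := hα
  rw [betLower, if_neg hμ1.ne] at hαl
  rw [betUpper, if_neg hμ0.ne'] at hαu
  lift α to ℝ using ⟨(lt_of_le_of_lt hαu (EReal.coe_lt_top _)).ne,
    (lt_of_lt_of_le (EReal.bot_lt_coe _) hαl).ne'⟩
  replace hαl : -(1-μ)⁻¹ ≤ α := EReal.coe_le_coe_iff.1 hαl
  replace hαu : α ≤ μ⁻¹ := EReal.coe_le_coe_iff.1 hαu
  have hx1 : 0 ≤ 1 + α * (1 - μ) := by
    have key : -(1-μ)⁻¹ * (1-μ) = -1 := by field_simp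
    nlinarith [mul_le_mul_of_nonneg_right hαl h1μ.le]
  have hx0 : 0 ≤ 1 - α * μ := by
    have key : μ⁻¹ * μ = 1 := inv_mul_cancel₀ hμ0.ne'
    nlinarith [mul_le_mul_of_nonneg_right hαu hμ0.le]
  by_cases hneg : ∃ t0, 1 + α * (z t0 - μ) ≤ 0
  · obtain ⟨t0, ht0⟩ := hneg
    rw [betTerm_bot (by omega) z μ α t0 ht0]
    exact bot_le
  · push_neg at hneg
    rw [betTerm_coe z μ α hneg, bkl_coe hμ0 hμ1]
    apply EReal.coe_le_coe_iff.2
    have hid : ∀ t : Fin T, Real.log (1 + α * (z t - μ))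
        = z t * Real.log (1 + α * (1-μ)) + (1 - z t) * Real.log (1 - α * μ) := by
      intro t
      rcases hzb t with h | h
      · rw [h, show 1 + α * ((0:ℝ) - μ) = 1 - α * μ by ring]
        norm_num
      · rw [h, show 1 + α * ((1:ℝ) - μ) = 1 + α * (1-μ) by ring]
        norm_num
    have e : ∑ t : Fin T, (1 - z t) = (T:ℝ) - T * p := by
      rw [Finset.sum_sub_distrib, hps]; simp
    have hsum : ∑ t : Fin T, Real.log (1 + α * (z t - μ))
        = (T*p) * Real.log (1 + α*(1-μ)) + ((T:ℝ) - T*p) * Real.log (1 - α*μ) := by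
      rw [Finset.sum_congr rfl fun t _ => hid t, Finset.sum_add_distrib,
        ← Finset.sum_mul, ← Finset.sum_mul, hps, e]
    rw [hsum]
    have e2 : (T:ℝ)⁻¹ * ((T*p) * Real.log (1+α*(1-μ)) + ((T:ℝ) - T*p) * Real.log (1-α*μ))
        = p * Real.log (1+α*(1-μ)) + (1-p) * Real.log (1-α*μ) := by
      field_simp
    rw [e2]
    have h1 : 0 < p → 0 < 1 + α * (1-μ) := by
      intro hp
      have hex : ∃ t, z t ≠ 0 := by
        by_contra hall; push_neg at hall
        have h0' : ∑ t, z t = 0 := Finset.sum_eq_zero fun t _ => hall t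
        rw [hps] at h0'; nlinarith
      obtain ⟨t0, ht0⟩ := hex
      have hz1 : z t0 = 1 := (hzb t0).resolve_left ht0
      have := hneg t0
      rw [hz1] at this
      nlinarith
    have h0 : p < 1 → 0 < 1 - α * μ := by
      intro hp
      have hex : ∃ t, z t ≠ 1 := by
        by_contra hall; push_neg at hall
        have h1' : ∑ t, z t = (T:ℝ) := by
          rw [Finset.sum_congr rfl fun t _ => hall t]; simp
        rw [hps] at h1'; nlinarith
      obtain ⟨t0, ht0⟩ := hex
      have hz0' : z t0 = 0 := (hzb t0).resolve_right ht0
      have := hneg t0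
      rw [hz0'] at this
      nlinarith
    exact real_upper hp0 hp1 hμ0 hμ1 (by ring) hx1 hx0 h1 h0

end Mid

section Degenerate

lemma psi_eq_mu0 {T : ℕ} (hT : 1 ≤ T) (z : Fin T → ℝ) (hz : ∀ t, z t ∈ Set.Icc (0:ℝ) 1) :
    Psi z 0 = bkl (muz z) 0 := by
  obtain ⟨hp0, hp1, hps⟩ := muz_mem hT z hz
  have hT0 : (0:ℝ) < T := by exact_mod_cast hT
  rcases eq_or_lt_of_le hp0 with h0 | h0
  · have hz0 : ∀ t, z t = 0 := by
      have hs0 : ∑ t, z t = 0 := by rw [hps, ← h0, mul_zero]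
      exact fun t =>
        (Finset.sum_eq_zero_iff_of_nonneg fun i _ => (hz i).1).1 hs0 t (Finset.mem_univ t)
    have hbet : ∀ α : EReal, betTerm z 0 α = 0 := by
      intro α
      rw [betTerm]
      have hterm : ∀ t : Fin T, elog (1 + α * ((z t - 0 : ℝ) : EReal)) = 0 := by
        intro t
        have hc : ((z t - 0 : ℝ) : EReal) = 0 := by rw [hz0 t]; norm_num
        rw [hc, mul_zero, add_zero, elog_one]
      rw [Finset.sum_congr rfl fun t _ => hterm t, Finset.sum_const, smul_zero, mul_zero]
    have hmem0 : (0 : EReal) ∈ betSet 0 := by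
      constructor
      · rw [betLower, if_neg (by norm_num : (0:ℝ) ≠ 1)]
        exact_mod_cast (by norm_num : -((1:ℝ)-0)⁻¹ ≤ 0)
      · rw [betUpper, if_pos rfl]; exact le_top
    have hbkl : bkl (muz z) 0 = 0 := by
      rw [← h0, bkl, if_pos rfl, if_neg (by norm_num : (0:ℝ) ≠ 1)]
      norm_num
    rw [hbkl]
    apply le_antisymm
    · rw [Psi]; exact iSup₂_le fun α _ => le_of_eq (hbet α)
    · rw [Psi]
      exact le_iSup₂_of_le (0 : EReal) hmem0 (le_of_eq (hbet 0).symm)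
  · obtain ⟨t0, ht0⟩ : ∃ t, 0 < z t := by
      by_contra hall; push_neg at hall
      have hs : ∑ t, z t ≤ 0 := Finset.sum_nonpos fun t _ => hall t
      rw [hps] at hs; nlinarith
    have htop : betTerm z 0 ⊤ = ⊤ := by
      rw [betTerm]
      have hsum : ∑ t : Fin T, elog (1 + ⊤ * ((z t - 0 : ℝ) : EReal)) = ⊤ := by
        apply top_le_iff.1
        have hterm : ∀ t : Fin T, (0:EReal) ≤ elog (1 + ⊤ * ((z t - 0 : ℝ) : EReal)) := by
          intro t
          rcases eq_or_lt_of_le (hz t).1 with h | h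
          · have hc : ((z t - 0 : ℝ) : EReal) = 0 := by rw [← h]; norm_num
            rw [hc, mul_zero, add_zero, elog_one]
          · rw [EReal.top_mul_coe_of_pos (by linarith : (0:ℝ) < z t - 0),
              one_add_top, elog_top]
            exact le_top
        calc (⊤:EReal) = elog (1 + ⊤ * ((z t0 - 0 : ℝ) : EReal)) := by
              rw [EReal.top_mul_coe_of_pos (by linarith : (0:ℝ) < z t0 - 0),
                one_add_top, elog_top]
          _ ≤ _ := Finset.single_le_sum (fun t _ => hterm t) (Finset.mem_univ t0)
      rw [hsum, EReal.coe_mul_top_of_pos (by positivity)]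
    have hpsit : Psi z 0 = ⊤ := by
      apply top_le_iff.1
      rw [Psi]
      refine le_iSup₂_of_le ⊤ ⟨le_top, ?_⟩ (le_of_eq htop.symm)
      rw [betUpper, if_pos rfl]
    have hbkl : bkl (muz z) 0 = ⊤ := by
      rw [bkl, if_neg (ne_of_gt h0)]
      by_cases h1 : muz z = 1
      · rw [if_pos h1, if_pos rfl]
      · rw [if_neg h1, if_pos (Or.inl rfl)]
    rw [hpsit, hbkl]

lemma psi_eq_mu1 {T : ℕ} (hT : 1 ≤ T) (z : Fin T → ℝ) (hz : ∀ t, z t ∈ Set.Icc (0:ℝ) 1) :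
    Psi z 1 = bkl (muz z) 1 := by
  obtain ⟨hp0, hp1, hps⟩ := muz_mem hT z hz
  have hT0 : (0:ℝ) < T := by exact_mod_cast hT
  rcases eq_or_lt_of_le hp1 with h1 | h1
  · have hz1 : ∀ t, z t = 1 := by
      have hs : ∑ t : Fin T, (1 - z t) = 0 := by
        rw [Finset.sum_sub_distrib, hps, ← h1]; simp
      intro t
      have := (Finset.sum_eq_zero_iff_of_nonneg
        fun i _ => sub_nonneg.2 (hz i).2).1 hs t (Finset.mem_univ t)
      linarith
    have hbet : ∀ α : EReal, betTerm z 1 α = 0 := by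
      intro α
      rw [betTerm]
      have hterm : ∀ t : Fin T, elog (1 + α * ((z t - 1 : ℝ) : EReal)) = 0 := by
        intro t
        have hc : ((z t - 1 : ℝ) : EReal) = 0 := by rw [hz1 t]; norm_num
        rw [hc, mul_zero, add_zero, elog_one]
      rw [Finset.sum_congr rfl fun t _ => hterm t, Finset.sum_const, smul_zero, mul_zero]
    have hmem0 : (⊥ : EReal) ∈ betSet 1 := by
      constructor
      · rw [betLower, if_pos rfl]
      · exact bot_le
    have hbkl : bkl (muz z) 1 = 0 := by
      rw [h1, bkl, if_neg (by norm_num : (1:ℝ) ≠ 0), if_pos rfl,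
        if_neg (by norm_num : (1:ℝ) ≠ 0)]
      norm_num
    rw [hbkl]
    apply le_antisymm
    · rw [Psi]; exact iSup₂_le fun α _ => le_of_eq (hbet α)
    · rw [Psi]
      exact le_iSup₂_of_le (⊥ : EReal) hmem0 (le_of_eq (hbet ⊥).symm)
  · obtain ⟨t0, ht0⟩ : ∃ t, z t < 1 := by
      by_contra hall; push_neg at hall
      have hs : (T:ℝ) ≤ ∑ t, z t := by
        calc (T:ℝ) = ∑ _t : Fin T, (1:ℝ) := by simp
        _ ≤ _ := Finset.sum_le_sum fun t _ => hall t
      rw [hps] at hs; nlinarith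
    have htop : betTerm z 1 ⊥ = ⊤ := by
      rw [betTerm]
      have hsum : ∑ t : Fin T, elog (1 + ⊥ * ((z t - 1 : ℝ) : EReal)) = ⊤ := by
        apply top_le_iff.1
        have hterm : ∀ t : Fin T, (0:EReal) ≤ elog (1 + ⊥ * ((z t - 1 : ℝ) : EReal)) := by
          intro t
          rcases eq_or_lt_of_le (hz t).2 with h | h
          · have hc : ((z t - 1 : ℝ) : EReal) = 0 := by rw [h]; norm_num
            rw [hc, mul_zero, add_zero, elog_one]
          · rw [EReal.bot_mul_coe_of_neg (by linarith : z t - 1 < 0),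
              one_add_top, elog_top]
            exact le_top
        calc (⊤:EReal) = elog (1 + ⊥ * ((z t0 - 1 : ℝ) : EReal)) := by
              rw [EReal.bot_mul_coe_of_neg (by linarith : z t0 - 1 < 0),
                one_add_top, elog_top]
          _ ≤ _ := Finset.single_le_sum (fun t _ => hterm t) (Finset.mem_univ t0)
      rw [hsum, EReal.coe_mul_top_of_pos (by positivity)]
    have hpsit : Psi z 1 = ⊤ := by
      apply top_le_iff.1
      rw [Psi]
      refine le_iSup₂_of_le ⊥ ⟨?_, bot_le⟩ (le_of_eq htop.symm)
      rw [betLower, if_pos rfl]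
    have hbkl : bkl (muz z) 1 = ⊤ := by
      by_cases h0 : muz z = 0
      · rw [bkl, if_pos h0, if_pos rfl]
      · rw [bkl, if_neg h0, if_neg (ne_of_lt h1), if_pos (Or.inr rfl)]
    rw [hpsit, hbkl]

end Degenerate

/-- `T · Ψ(z, μ) ≥ T · kl(μ_z, μ)`, with equality whenever `z` is a binary sequence. -/
theorem psi_ge_kl {T : ℕ} (hT : 1 ≤ T) (z : Fin T → ℝ)
    (hz : ∀ t, z t ∈ Set.Icc (0 : ℝ) 1) (μ : ℝ) (hμ : μ ∈ Set.Icc (0 : ℝ) 1) :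
    ((T : ℝ) : EReal) * bkl (muz z) μ ≤ ((T : ℝ) : EReal) * Psi z μ ∧
    ((∀ t, z t = 0 ∨ z t = 1) → ((T : ℝ) : EReal) * Psi z μ = ((T : ℝ) : EReal) * bkl (muz z) μ) := by
  have key : bkl (muz z) μ ≤ Psi z μ ∧
      ((∀ t, z t = 0 ∨ z t = 1) → Psi z μ = bkl (muz z) μ) := by
    rcases eq_or_lt_of_le hμ.1 with h0 | h0
    · rw [← h0]
      have h := psi_eq_mu0 hT z hz
      exact ⟨le_of_eq h.symm, fun _ => h⟩
    rcases eq_or_lt_of_le hμ.2 with h1 | h1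
    · rw [h1]
      have h := psi_eq_mu1 hT z hz
      exact ⟨le_of_eq h.symm, fun _ => h⟩
    · exact ⟨lower_mid hT z hz h0 h1,
        fun hb => le_antisymm (upper_mid hT z hz hb h0 h1) (lower_mid hT z hz h0 h1)⟩
  refine ⟨mul_le_mul_of_nonneg_left key.1 ?_, fun hb => by rw [key.2 hb]⟩
  exact EReal.coe_nonneg.2 (Nat.cast_nonneg T)
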